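/- (Riemann–Roch for trees) Let T be a finite tree (a connected acyclic simple graph) with at least one vertex, and let K be its canonical divisor, K(v) = deg(v) − 2. Then for every divisor D on T, r(D) − r(K − D) = deg(D) + 1, where r denotes the rank of a divisor (note the genus of a tree is 0). -/

import Mathlib

open Finset

/-- The degree of a vertex of a simple graph: the number of its neighbors. -/
noncomputable def degS {V : Type*} (G : SimpleGraph V) (v : V) : ℕ :=
  {u | G.Adj v u}.ncard

open Classical in
/-- The Laplacian matrix of a simple graph `G`:
`L v v = deg v`, `L v w = -1` if `v w` is an edge, and `0` otherwise. -/
noncomputable def lapS {V : Type*} (G : SimpleGraph V) (v w : V) : ℤ :=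
  if v = w then (degS G v : ℤ) else if G.Adj v w then -1 else 0

/-- The Laplacian applied to a firing function `f`, evaluated at `v`. -/
noncomputable def lapApplyS {V : Type*} [Fintype V] (G : SimpleGraph V)
    (f : V → ℤ) (v : V) : ℤ :=
  ∑ w, lapS G v w * f w

/-- A divisor is winnable if it is linearly equivalent to an effective divisor. -/
def WinnableS {V : Type*} [Fintype V] (G : SimpleGraph V) (D : V → ℤ) : Prop :=
  ∃ f : V → ℤ, ∀ v, 0 ≤ D v - lapApplyS G f v

/-- The Baker–Norine rank of a divisor on a simple graph. -/
noncomputable def rankS {V : Type*} [Fintype V] (G : SimpleGraph V) (D : V → ℤ) : ℤ :=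
  sSup {r : ℤ | ∀ E : V → ℤ, (∀ v, 0 ≤ E v) → (∑ v, E v) = r →
    WinnableS G (fun v => D v - E v)}

section Aux

variable {V : Type*} [Fintype V]

open Classical

lemma degS_cast (G : SimpleGraph V) (v : V) :
    (degS G v : ℤ) = ∑ w, (if G.Adj v w then (1 : ℤ) else 0) := by
  classical
  rw [degS, Set.ncard_eq_toFinset_card', Set.toFinset_setOf, Finset.sum_boole]

lemma lapS_eq (G : SimpleGraph V) (v w : V) :
    lapS G v w = (if v = w then (degS G v : ℤ) else 0) - (if G.Adj v w then 1 else 0) := by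
  classical
  unfold lapS
  by_cases h : v = w
  · subst h; simp [G.irrefl]
  · simp [h]
    split_ifs <;> ring

lemma sum_lapS (G : SimpleGraph V) (w : V) : ∑ v, lapS G v w = 0 := by
  classical
  simp only [lapS_eq]
  rw [Finset.sum_sub_distrib]
  rw [Finset.sum_ite_eq' Finset.univ w (fun v => (degS G v : ℤ))]
  have h : ∑ v, (if G.Adj v w then (1 : ℤ) else 0) = (degS G w : ℤ) := by
    rw [degS_cast]
    exact Finset.sum_congr rfl fun v _ => by rw [G.adj_comm]
  simp [h]

lemma sum_lapApplyS (G : SimpleGraph V) (f : V → ℤ) : ∑ v, lapApplyS G f v = 0 := by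
  classical
  unfold lapApplyS
  rw [Finset.sum_comm]
  have : ∀ w : V, ∑ v, lapS G v w * f w = 0 := by
    intro w
    rw [← Finset.sum_mul, sum_lapS, zero_mul]
  simp [this]

lemma lapApplyS_eq (G : SimpleGraph V) (f : V → ℤ) (x : V) :
    lapApplyS G f x = ∑ w, (if G.Adj x w then f x - f w else 0) := by
  classical
  unfold lapApplyS
  simp only [lapS_eq, sub_mul]
  rw [Finset.sum_sub_distrib]
  have h1 : ∑ w, (if x = w then (degS G x : ℤ) else 0) * f w = (degS G x : ℤ) * f x := by
    rw [Finset.sum_congr rfl (fun w _ => ite_mul (x = w) ((degS G x : ℤ)) 0 (f w))]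
    simp [Finset.sum_ite_eq]
  rw [h1, degS_cast, Finset.sum_mul, ← Finset.sum_sub_distrib]
  apply Finset.sum_congr rfl
  intro w _
  split_ifs <;> ring

lemma lapApplyS_add (G : SimpleGraph V) (f g : V → ℤ) (x : V) :
    lapApplyS G (f + g) x = lapApplyS G f x + lapApplyS G g x := by
  unfold lapApplyS
  rw [← Finset.sum_add_distrib]
  apply Finset.sum_congr rfl
  intro w _
  simp [mul_add]

lemma lapApplyS_sum (G : SimpleGraph V) (c : V → ℤ) (g : V → V → ℤ) (x : V) :
    lapApplyS G (fun y => ∑ v, c v * g v y) x = ∑ v, c v * lapApplyS G (g v) x := by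
  unfold lapApplyS
  simp only [Finset.mul_sum]
  rw [Finset.sum_comm]
  apply Finset.sum_congr rfl
  intro v _
  apply Finset.sum_congr rfl
  intro w _
  ring

lemma lap_edge {G : SimpleGraph V} (hT : G.IsTree) {u v : V} (huv : G.Adj u v) :
    ∃ f : V → ℤ, ∀ x, lapApplyS G f x =
      (if x = u then 1 else 0) - (if x = v then 1 else 0) := by
  classical
  set G' := G \ SimpleGraph.fromEdgeSet {s(u, v)} with hG'
  have hbr : ¬ G'.Reachable u v := by
    have hb := (SimpleGraph.isAcyclic_iff_forall_edge_isBridge.mp hT.2)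
      (show s(u, v) ∈ G.edgeSet from huv)
    exact SimpleGraph.isBridge_iff.mp hb
  refine ⟨fun y => if G'.Reachable u y then 1 else 0, ?_⟩
  intro x
  rw [lapApplyS_eq]
  have key : ∀ w, G.Adj x w → ¬(x = u ∧ w = v) → ¬(x = v ∧ w = u) →
      (G'.Reachable u x ↔ G'.Reachable u w) := by
    intro w hxw h1 h2
    have hadj : G'.Adj x w := by
      rw [hG']
      simp only [SimpleGraph.sdiff_adj, SimpleGraph.fromEdgeSet_adj]
      refine ⟨hxw, ?_⟩
      intro hmem
      have hmem1 := hmem.1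
      rw [Set.mem_singleton_iff, Sym2.eq_iff] at hmem1
      rcases hmem1 with ⟨ha, hb⟩ | ⟨ha, hb⟩
      · exact h1 ⟨ha, hb⟩
      · exact h2 ⟨ha, hb⟩
    exact ⟨fun h => h.trans hadj.reachable, fun h => h.trans hadj.symm.reachable⟩
  by_cases hxu : x = u
  · subst hxu
    have hfx : G'.Reachable x x := SimpleGraph.Reachable.refl x
    have hne : x ≠ v := huv.ne
    rw [if_pos rfl, if_neg hne, sub_zero, Finset.sum_eq_single v]
    · rw [if_pos huv, if_pos hfx, if_neg hbr]; norm_num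
    · intro w _ hwv
      by_cases hadj : G.Adj x w
      · have hiff := key w hadj (fun h => hwv h.2) (fun h => huv.ne h.1)
        rw [if_pos hadj, if_pos hfx, if_pos (hiff.mp hfx)]
        ring
      · rw [if_neg hadj]
    · intro h
      exact absurd (Finset.mem_univ v) h
  · by_cases hxv : x = v
    · subst hxv
      have hne : x ≠ u := fun h => huv.ne h.symm
      rw [if_neg hne, if_pos rfl, zero_sub, Finset.sum_eq_single u]
      · rw [if_pos huv.symm, if_neg hbr, if_pos (SimpleGraph.Reachable.refl u)]; norm_num
      · intro w _ hwu
        by_cases hadj : G.Adj x w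
        · have hiff := key w hadj (fun h => hne h.1) (fun h => hwu h.2)
          have hnw : ¬ G'.Reachable u w := fun hw => hbr (hiff.mpr hw)
          rw [if_pos hadj, if_neg hbr, if_neg hnw]
          ring
        · rw [if_neg hadj]
      · intro h
        exact absurd (Finset.mem_univ u) h
    · have h0 : (if x = u then (1 : ℤ) else 0) - (if x = v then 1 else 0) = 0 := by
        simp [hxu, hxv]
      rw [h0]
      apply Finset.sum_eq_zero
      intro w _
      by_cases hadj : G.Adj x w
      · have hiff := key w hadj (fun h => hxu h.1) (fun h => hxv h.1)
        rw [if_pos hadj]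
        by_cases hr : G'.Reachable u x
        · rw [if_pos hr, if_pos (hiff.mp hr)]; ring
        · rw [if_neg hr, if_neg (fun hw => hr (hiff.mpr hw))]; ring
      · rw [if_neg hadj]

lemma lap_pair {G : SimpleGraph V} (hT : G.IsTree) (a b : V) :
    ∃ f : V → ℤ, ∀ x, lapApplyS G f x =
      (if x = a then 1 else 0) - (if x = b then 1 else 0) := by
  obtain ⟨p⟩ := hT.isConnected a b
  induction p with
  | nil =>
    refine ⟨0, ?_⟩
    intro x
    simp [lapApplyS]
  | @cons a c b h p ih =>
    obtain ⟨f₂, hf₂⟩ := ih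
    obtain ⟨f₁, hf₁⟩ := lap_edge hT h
    refine ⟨f₁ + f₂, ?_⟩
    intro x
    rw [lapApplyS_add, hf₁ x, hf₂ x]
    ring

lemma winnableS_iff {G : SimpleGraph V} (hT : G.IsTree) (D : V → ℤ) :
    WinnableS G D ↔ 0 ≤ ∑ v, D v := by
  classical
  constructor
  · rintro ⟨f, hf⟩
    have h1 : ∑ v, (D v - lapApplyS G f v) = ∑ v, D v := by
      rw [Finset.sum_sub_distrib, sum_lapApplyS, sub_zero]
    have h2 : (0 : ℤ) ≤ ∑ v, (D v - lapApplyS G f v) :=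
      Finset.sum_nonneg (fun v _ => hf v)
    omega
  · intro h
    obtain ⟨v0⟩ := hT.isConnected.nonempty
    choose g hg using fun v => lap_pair hT v v0
    refine ⟨fun x => ∑ v, D v * g v x, ?_⟩
    intro x
    rw [lapApplyS_sum]
    have hkey : ∑ v, D v * lapApplyS G (g v) x
        = D x - (if x = v0 then ∑ v, D v else 0) := by
      have : ∀ v, D v * lapApplyS G (g v) x
          = (if x = v then D v else 0) - (if x = v0 then D v else 0) := by
        intro v
        rw [hg v x]
        split_ifs <;> ring
      rw [Finset.sum_congr rfl (fun v _ => this v), Finset.sum_sub_distrib]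
      congr 1
      · simp [Finset.sum_ite_eq]
      · split_ifs <;> simp
    rw [hkey]
    split_ifs <;> omega

lemma rankS_eq {G : SimpleGraph V} (hT : G.IsTree) (D : V → ℤ) :
    rankS G D = max (∑ v, D v) (-1) := by
  classical
  have hset : {r : ℤ | ∀ E : V → ℤ, (∀ v, 0 ≤ E v) → (∑ v, E v) = r →
      WinnableS G (fun v => D v - E v)} = Set.Iic (max (∑ v, D v) (-1)) := by
    ext r
    simp only [Set.mem_setOf_eq, Set.mem_Iic]
    constructor
    · intro hr
      by_contra hlt
      push_neg at hlt
      have hr0 : 0 ≤ r := by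
        have := le_max_right (∑ v, D v) (-1)
        omega
      obtain ⟨v0⟩ := hT.isConnected.nonempty
      have hw := hr (fun v => if v = v0 then r else 0)
        (fun v => by split_ifs <;> omega)
        (by simp [Finset.sum_ite_eq'])
      rw [winnableS_iff hT] at hw
      have hsum : ∑ v, (D v - if v = v0 then r else 0) = ∑ v, D v - r := by
        rw [Finset.sum_sub_distrib]
        simp [Finset.sum_ite_eq']
      rw [hsum] at hw
      have := le_max_left (∑ v, D v) (-1)
      omega
    · intro hr E hE hEr
      rw [winnableS_iff hT]
      have h0 : 0 ≤ r := hEr ▸ Finset.sum_nonneg (fun v _ => hE v)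
      have hle : r ≤ ∑ v, D v := by
        rcases le_max_iff.mp hr with h | h
        · exact h
        · omega
      rw [Finset.sum_sub_distrib, hEr]
      omega
  rw [rankS, hset, csSup_Iic]

lemma degS_eq_degree (G : SimpleGraph V) [DecidableRel G.Adj] (v : V) :
    degS G v = G.degree v := by
  have h : degS G v = Nat.card (G.neighborSet v) := (Nat.card_coe_set_eq _).symm
  rw [h, Nat.card_eq_fintype_card, G.card_neighborSet_eq_degree]

end Aux

/-- **Riemann–Roch for trees.**
For a finite tree `T` (a connected acyclic simple graph) with at least one vertex,
canonical divisor `K v = deg v - 2`, and any divisor `D`,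
`r(D) - r(K - D) = deg D + 1` (the genus of a tree being `0`). -/
theorem riemann_roch_for_trees {V : Type*} [Fintype V] [Nonempty V]
    (G : SimpleGraph V) (hT : G.IsTree) (D : V → ℤ) :
    rankS G D - rankS G (fun v => ((degS G v : ℤ) - 2) - D v) = (∑ v, D v) + 1 := by
  classical
  letI : DecidableEq V := Classical.decEq _
  letI : DecidableRel G.Adj := Classical.decRel _
  have hdeg : ∑ v, (degS G v : ℤ) = 2 * (Fintype.card V : ℤ) - 2 := by
    have h1 : ∑ v, G.degree v = 2 * G.edgeFinset.card :=
      SimpleGraph.sum_degrees_eq_twice_card_edges G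
    have h2 : G.edgeFinset.card + 1 = Fintype.card V := hT.card_edgeFinset
    have h3 : ∑ v, (degS G v : ℤ) = ((∑ v, G.degree v : ℕ) : ℤ) := by
      push_cast
      exact Finset.sum_congr rfl (fun v _ => by rw [degS_eq_degree])
    rw [h3, h1]
    push_cast
    omega
  have hK : ∑ v, (((degS G v : ℤ) - 2) - D v) = -2 - ∑ v, D v := by
    rw [Finset.sum_sub_distrib, Finset.sum_sub_distrib, hdeg, Finset.sum_const,
      Finset.card_univ, nsmul_eq_mul]
    ring
  rw [rankS_eq hT, rankS_eq hT, hK]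
  set d := ∑ v, D v with hd
  rcases le_total (-1 : ℤ) d with h | h
  · rw [max_eq_left h, max_eq_right (by omega : -2 - d ≤ -1)]
    ring
  · rw [max_eq_right h, max_eq_left (by omega : (-1 : ℤ) ≤ -2 - d)]
    ring
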